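/- Let S = {s_1, …, s_t} be a finite set of integers with 1 < s_1 < s_2 < … < s_t and gcd(s_1, …, s_t) = 1. Then the set of representable integers k that are not greedy-representable is infinite. (In fact, for any gap g of the numerical semigroup ⟨S⟩, all sufficiently large elements of the arithmetic progression {g + j·s_t : j ∈ ℕ} are representable but not greedy-representable.) -/

import Mathlib

open Finset

/-- `a` is a representation of `k` with respect to the denominations `s`:
a vector of nonnegative integers with `∑ i, a i * s i = k`. -/
def IsRep {t : ℕ} (s : Fin t → ℕ) (k : ℕ) (a : Fin t → ℕ) : Prop :=
  ∑ i, a i * s i = k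

/-- `k` is representable with respect to `s`. -/
def Representable {t : ℕ} (s : Fin t → ℕ) (k : ℕ) : Prop :=
  ∃ a, IsRep s k a

/-- `MinCost_S(k)`: the minimum cost `∑ i, a i` over all representations `a` of `k`. -/
noncomputable def minCost {t : ℕ} (s : Fin t → ℕ) (k : ℕ) : ℕ :=
  sInf {c | ∃ a, IsRep s k a ∧ ∑ i, a i = c}

/-- `a` is the greedy representation of `k`: the representation whose reversed vector
`(a_t, …, a_1)` is greatest in lexicographic order among the reversed vectors of all
representations of `k`. -/
def IsGreedyRep {t : ℕ} (s : Fin t → ℕ) (k : ℕ) (a : Fin t → ℕ) : Prop :=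
  IsRep s k a ∧
    ∀ b, IsRep s k b → b = a ∨ ∃ i, b i < a i ∧ ∀ j, i < j → b j = a j

/-- `GreedyCost_S(k)`: the cost of the greedy representation of `k`
(the greedy representation is unique when it exists). -/
noncomputable def greedyCost {t : ℕ} (s : Fin t → ℕ) (k : ℕ) : ℕ :=
  sInf {c | ∃ a, IsGreedyRep s k a ∧ ∑ i, a i = c}

/-- The final remainder `r_0` of the naive greedy algorithm: for `i = t` down to `1`,
replace the current remainder `r` by `r % s_i`. -/
def greedyRem {t : ℕ} (s : Fin t → ℕ) (k : ℕ) : ℕ :=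
  ((List.ofFn s).reverse).foldl (· % ·) k

/-- A counterexample for `S`: a representable `k > 0` with `MinCost_S(k) < GreedyCost_S(k)`. -/
def IsCounterexample {t : ℕ} (s : Fin t → ℕ) (k : ℕ) : Prop :=
  0 < k ∧ Representable s k ∧ minCost s k < greedyCost s k

/-- A witness for `S`: a representable `k > 0` such that for some generator `s i` with
`k - s i` nonnegative and representable, `GreedyCost_S(k) > GreedyCost_S(k - s i) + 1`. -/
def IsWitness {t : ℕ} (s : Fin t → ℕ) (k : ℕ) : Prop :=
  0 < k ∧ Representable s k ∧ ∃ i : Fin t, s i ≤ k ∧ Representable s (k - s i) ∧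
    greedyCost s (k - s i) + 1 < greedyCost s k

lemma rep_add {t : ℕ} (s : Fin t → ℕ) {k l : ℕ} (hk : Representable s k)
    (hl : Representable s l) : Representable s (k + l) := by
  obtain ⟨a, ha⟩ := hk; obtain ⟨b, hb⟩ := hl
  exact ⟨fun i => a i + b i, by
    unfold IsRep at *
    simp only [add_mul, Finset.sum_add_distrib, ha, hb]⟩

lemma rep_mul_gen {t : ℕ} (s : Fin t → ℕ) (q : ℕ) (i : Fin t) :
    Representable s (q * s i) :=
  ⟨fun j => if j = i then q else 0, by simp [IsRep, ite_mul, Finset.sum_ite_eq']⟩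

lemma rep_zero {t : ℕ} (s : Fin t → ℕ) : Representable s 0 := ⟨0, by simp [IsRep]⟩

lemma rep_of_mem_closure {t : ℕ} (s : Fin t → ℕ) {k : ℕ}
    (hk : k ∈ AddSubmonoid.closure (Set.range s)) : Representable s k := by
  induction hk using AddSubmonoid.closure_induction with
  | mem x hx => obtain ⟨i, rfl⟩ := hx; simpa using rep_mul_gen s 1 i
  | zero => exact rep_zero s
  | add x y _ _ hx hy => exact rep_add s hx hy

lemma foldl_mod_mem (l : List ℕ) (k : ℕ) :
    ∃ m ∈ AddSubmonoid.closure {x : ℕ | x ∈ l}, l.foldl (· % ·) k + m = k := by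
  induction l generalizing k with
  | nil => exact ⟨0, zero_mem _, rfl⟩
  | cons a l ih =>
    obtain ⟨m, hm, hsum⟩ := ih (k % a)
    have h1 : m ∈ AddSubmonoid.closure {x : ℕ | x ∈ a :: l} :=
      AddSubmonoid.closure_mono (fun x hx => List.mem_cons_of_mem a hx) hm
    have h2 : k / a * a ∈ AddSubmonoid.closure {x : ℕ | x ∈ a :: l} := by
      have := (AddSubmonoid.closure {x : ℕ | x ∈ a :: l}).nsmul_mem
        (AddSubmonoid.subset_closure
          (show a ∈ {x : ℕ | x ∈ a :: l} from List.mem_cons_self)) (k / a)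
      simpa [nsmul_eq_mul] using this
    refine ⟨m + k / a * a, add_mem h1 h2, ?_⟩
    have h3 : k % a + k / a * a = k := Nat.mod_add_div' k a
    simp only [List.foldl_cons]
    omega

lemma representable_of_greedyRem_eq_zero {t : ℕ} (s : Fin t → ℕ) {k : ℕ}
    (h : greedyRem s k = 0) : Representable s k := by
  obtain ⟨m, hm, hsum⟩ := foldl_mod_mem ((List.ofFn s).reverse) k
  rw [greedyRem] at h
  have hmk : m = k := by omega
  subst hmk
  apply rep_of_mem_closure
  have : {x : ℕ | x ∈ (List.ofFn s).reverse} = Set.range s := by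
    ext x; simp [List.mem_ofFn]
  rwa [this] at hm

lemma greedyRem_add {n : ℕ} (s : Fin (n + 1) → ℕ) (k j : ℕ) :
    greedyRem s (k + j * s (Fin.last n)) = greedyRem s k := by
  unfold greedyRem
  rw [List.ofFn_succ', List.concat_eq_append, List.reverse_append]
  simp [Nat.add_mul_mod_self_right]

lemma finset_gcd_bezout {t : ℕ} (s : Fin t → ℕ) (u : Finset (Fin t)) :
    ∃ x : Fin t → ℤ, ∑ i ∈ u, x i * s i = u.gcd s := by
  induction u using Finset.induction with
  | empty => exact ⟨0, by simp⟩
  | @insert a u ha ih =>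
    obtain ⟨x, hx⟩ := ih
    refine ⟨fun i => if i = a then Nat.gcdA (s a) (u.gcd s)
      else Nat.gcdB (s a) (u.gcd s) * x i, ?_⟩
    rw [Finset.sum_insert ha, Finset.gcd_insert]
    simp only [if_pos rfl, if_true, eq_self_iff_true]
    have hsum : ∑ i ∈ u, (if i = a then Nat.gcdA (s a) (u.gcd s)
        else Nat.gcdB (s a) (u.gcd s) * x i) * (s i : ℤ)
        = Nat.gcdB (s a) (u.gcd s) * ∑ i ∈ u, x i * (s i : ℤ) := by
      rw [Finset.mul_sum]
      refine Finset.sum_congr rfl fun i hi => ?_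
      rw [if_neg (by rintro rfl; exact ha hi)]; ring
    rw [hsum, hx]
    have hb : ((GCDMonoid.gcd (s a) (u.gcd s) : ℕ) : ℤ)
        = (s a : ℤ) * Nat.gcdA (s a) (u.gcd s) + ((u.gcd s : ℕ) : ℤ) * Nat.gcdB (s a) (u.gcd s) := by
      rw [show GCDMonoid.gcd (s a) (u.gcd s) = Nat.gcd (s a) (u.gcd s) from rfl]
      exact_mod_cast Nat.gcd_eq_gcd_ab (s a) (u.gcd s)
    rw [hb]; ring

lemma rep_smul {t : ℕ} (s : Fin t → ℕ) {k : ℕ} (g : ℕ) (hk : Representable s k) :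
    Representable s (g * k) := by
  obtain ⟨a, ha⟩ := hk
  exact ⟨fun i => g * a i, by
    unfold IsRep at *
    simp only [mul_assoc, ← Finset.mul_sum, ha]⟩


/-- The set of representable integers that are not greedy-representable is infinite;
in fact, for any gap `g` of `⟨S⟩`, all sufficiently large elements of the progression
`{g + j * s_t : j ∈ ℕ}` are representable but not greedy-representable. -/
theorem representable_not_greedyRepresentable_infinite {t : ℕ} (ht : 0 < t)
    (s : Fin t → ℕ) (hmono : StrictMono s) (hone : 1 < s ⟨0, ht⟩)
    (hgcd : Finset.univ.gcd s = 1) :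
    {k : ℕ | Representable s k ∧ greedyRem s k ≠ 0}.Infinite ∧
    ∀ g : ℕ, ¬ Representable s g →
      ∃ N : ℕ, ∀ j : ℕ, N ≤ j →
        Representable s (g + j * s ⟨t - 1, by omega⟩) ∧
        greedyRem s (g + j * s ⟨t - 1, by omega⟩) ≠ 0 := by
  obtain ⟨n, rfl⟩ : ∃ n, t = n + 1 := ⟨t - 1, by omega⟩
  have hs_all : ∀ i : Fin (n + 1), 2 ≤ s i := by
    intro i
    have h2 : s ⟨0, ht⟩ ≤ s i := hmono.monotone (Fin.zero_le i)
    omega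
  have hstpos : 0 < s (Fin.last n) := by have := hs_all (Fin.last n); omega
  have hst2 : (2 : ℤ) ≤ (s (Fin.last n) : ℤ) := by exact_mod_cast hs_all (Fin.last n)
  -- Bezout
  obtain ⟨x, hx⟩ := finset_gcd_bezout s Finset.univ
  rw [hgcd] at hx
  have hx1 : ∑ i, x i * (s i : ℤ) = 1 := by exact_mod_cast hx
  set M : ℕ := Finset.univ.sup fun i => (x i).natAbs with hM
  have hnn : ∀ i, (0 : ℤ) ≤ x i + (M : ℤ) * (s (Fin.last n) : ℤ) := by
    intro i
    have h1 : (x i).natAbs ≤ M := Finset.le_sup (f := fun i => (x i).natAbs) (Finset.mem_univ i)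
    have h1' : ((x i).natAbs : ℤ) ≤ (M : ℤ) := by exact_mod_cast h1
    have h2 : (M : ℤ) ≤ (M : ℤ) * (s (Fin.last n) : ℤ) := by nlinarith
    have h3 : -((x i).natAbs : ℤ) ≤ x i := by omega
    linarith
  set e : Fin (n + 1) → ℕ := fun i => (x i + (M : ℤ) * (s (Fin.last n) : ℤ)).toNat with he
  set E : ℕ := ∑ i, e i * s i with hE
  have hEcast : (E : ℤ) = 1 + ((M : ℤ) * (s (Fin.last n) : ℤ)) * ∑ i, (s i : ℤ) := by
    rw [hE]
    push_cast
    have : ∀ i : Fin (n + 1), ((e i : ℤ)) * (s i : ℤ)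
        = x i * (s i : ℤ) + ((M : ℤ) * (s (Fin.last n) : ℤ)) * (s i : ℤ) := by
      intro i
      rw [he]
      simp only []
      rw [Int.toNat_of_nonneg (hnn i)]
      ring
    rw [Finset.sum_congr rfl fun i _ => this i, Finset.sum_add_distrib, hx1,
      ← Finset.mul_sum]
  have hEnat : E = 1 + (M * ∑ i, s i) * s (Fin.last n) := by
    have : (E : ℤ) = ((1 + (M * ∑ i, s i) * s (Fin.last n) : ℕ) : ℤ) := by
      rw [hEcast]; push_cast; ring
    exact_mod_cast this
  have hEmod : E % s (Fin.last n) = 1 % s (Fin.last n) := by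
    rw [hEnat]; exact Nat.add_mul_mod_self_right 1 _ _
  have hErep : Representable s E := ⟨e, rfl⟩
  -- the key claim
  have key : ∀ g : ℕ, ¬ Representable s g →
      ∃ N : ℕ, ∀ j : ℕ, N ≤ j →
        Representable s (g + j * s (Fin.last n)) ∧
        greedyRem s (g + j * s (Fin.last n)) ≠ 0 := by
    intro g hg
    refine ⟨g * E, fun j hj => ?_⟩
    constructor
    · have hle : g * E ≤ g + j * s (Fin.last n) := by
        have h1 : j ≤ j * s (Fin.last n) := Nat.le_mul_of_pos_right j hstpos
        omega
      have hmod : (g * E) % s (Fin.last n) = (g + j * s (Fin.last n)) % s (Fin.last n) := by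
        have h1 : g * E ≡ g * 1 [MOD s (Fin.last n)] := Nat.ModEq.mul_left g hEmod
        calc (g * E) % s (Fin.last n) = (g * 1) % s (Fin.last n) := h1
          _ = g % s (Fin.last n) := by rw [mul_one]
          _ = (g + j * s (Fin.last n)) % s (Fin.last n) :=
            (Nat.add_mul_mod_self_right g j (s (Fin.last n))).symm
      obtain ⟨q, hq⟩ := (Nat.modEq_iff_dvd' hle).mp hmod
      have heq : g + j * s (Fin.last n) = g * E + s (Fin.last n) * q := by
        rw [← hq]; exact (Nat.add_sub_cancel' hle).symm
      rw [heq, mul_comm (s (Fin.last n)) q]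
      exact rep_add s (rep_smul s g hErep) (rep_mul_gen s q (Fin.last n))
    · rw [greedyRem_add s g j]
      intro h0
      exact hg (representable_of_greedyRem_eq_zero s h0)
  have h1 : ¬ Representable s 1 := by
    rintro ⟨a, ha⟩
    unfold IsRep at ha
    by_cases h : ∀ i, a i = 0
    · simp [h] at ha
    · push_neg at h
      obtain ⟨i, hi⟩ := h
      have h2 : 2 ≤ a i * s i := by
        have h3 := hs_all i
        have h4 : 1 ≤ a i := Nat.one_le_iff_ne_zero.mpr hi
        calc 2 ≤ s i := h3
          _ = 1 * s i := (one_mul _).symm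
          _ ≤ a i * s i := Nat.mul_le_mul_right _ h4
      have h5 : a i * s i ≤ ∑ j, a j * s j :=
        Finset.single_le_sum (f := fun j => a j * s j) (fun j _ => Nat.zero_le _)
          (Finset.mem_univ i)
      omega
  refine ⟨?_, fun g hg => key g hg⟩
  obtain ⟨N, hN⟩ := key 1 h1
  apply Set.infinite_of_injective_forall_mem
    (f := fun j : ℕ => 1 + (N + j) * s (Fin.last n))
  · intro a b hab
    simp only [] at hab
    have h2 := Nat.add_left_cancel hab
    have h3 := Nat.eq_of_mul_eq_mul_right hstpos h2
    omega
  · intro j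
    exact hN (N + j) (Nat.le_add_right N j)
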